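/- Let τ > 0 and a₀, a₁, b₀, s₀ be real numbers, and let Δ(s) = s² + a₁ s + a₀ + b₀ e^{−sτ}. Then s₀ is a root of Δ of multiplicity at least 3 (i.e., Δ(s₀) = Δ′(s₀) = Δ″(s₀) = 0) if and only if a₁ = −2s₀ − 2/τ, a₀ = s₀² + 2s₀/τ + 2/τ², and b₀ = −(2/τ²) e^{s₀τ}; moreover, in this case the multiplicity is exactly 3, i.e., Δ‴(s₀) ≠ 0. -/

import Mathlib

section Aux

variable (τ a₀ a₁ b₀ : ℝ)

private noncomputable def midF : ℂ → ℂ := fun s =>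
  s ^ 2 + (a₁ : ℂ) * s + (a₀ : ℂ) + (b₀ : ℂ) * Complex.exp (-s * τ)

private noncomputable def midG1 : ℂ → ℂ := fun s =>
  2 * s + (a₁ : ℂ) + (b₀ : ℂ) * (-(τ : ℂ)) * Complex.exp (-s * τ)

private noncomputable def midG2 : ℂ → ℂ := fun s =>
  2 + (b₀ : ℂ) * (τ : ℂ) ^ 2 * Complex.exp (-s * τ)

private noncomputable def midG3 : ℂ → ℂ := fun s =>
  (b₀ : ℂ) * (τ : ℂ) ^ 2 * (-(τ : ℂ)) * Complex.exp (-s * τ)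

private lemma hexp (s : ℂ) :
    HasDerivAt (fun s : ℂ => Complex.exp (-s * (τ : ℂ)))
      (-(τ : ℂ) * Complex.exp (-s * τ)) s := by
  have h1 : HasDerivAt (fun s : ℂ => -s * (τ : ℂ)) (-(τ : ℂ)) s := by
    simpa using ((hasDerivAt_id s).neg.mul_const (τ : ℂ))
  simpa [mul_comm] using h1.cexp

private lemma hd1 (s : ℂ) : HasDerivAt (midF τ a₀ a₁ b₀) (midG1 τ a₁ b₀ s) s := by
  have h := (((hasDerivAt_pow 2 s).add
      (((hasDerivAt_id s).const_mul (a₁ : ℂ)))).add_const (a₀ : ℂ)).add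
      ((hexp τ s).const_mul (b₀ : ℂ))
  refine h.congr_deriv ?_
  simp [midG1]; ring

private lemma hd2 (s : ℂ) : HasDerivAt (midG1 τ a₁ b₀) (midG2 τ b₀ s) s := by
  have h := ((((hasDerivAt_id s).const_mul (2 : ℂ)).add_const (a₁ : ℂ)).add
      ((hexp τ s).const_mul ((b₀ : ℂ) * (-(τ : ℂ)))))
  refine h.congr_deriv ?_
  simp [midG2]; ring

private lemma hd3 (s : ℂ) : HasDerivAt (midG2 τ b₀) (midG3 τ b₀ s) s := by
  have h := (((hexp τ s).const_mul ((b₀ : ℂ) * (τ : ℂ) ^ 2)).const_add (2 : ℂ))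
  refine h.congr_deriv ?_
  simp [midG3]; ring

end Aux

/-- For `Δ(s) = s² + a₁ s + a₀ + b₀ e^{-sτ}` with `τ > 0`, a real `s₀` is a root
of multiplicity at least `3` iff `a₁ = -2s₀ - 2/τ`, `a₀ = s₀² + 2s₀/τ + 2/τ²`,
and `b₀ = -(2/τ²) e^{s₀ τ}`; moreover, in that case `Δ'''(s₀) ≠ 0`, so the
multiplicity is exactly `3`. -/
theorem mid_characterization_n2_m0 (τ a₀ a₁ b₀ s₀ : ℝ) (hτ : 0 < τ) :
    ((∀ k ≤ 2,
        iteratedDeriv k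
          (fun s : ℂ => s ^ 2 + (a₁ : ℂ) * s + (a₀ : ℂ) +
            (b₀ : ℂ) * Complex.exp (-s * τ)) (s₀ : ℂ) = 0) ↔
      (a₁ = -2 * s₀ - 2 / τ ∧ a₀ = s₀ ^ 2 + 2 * s₀ / τ + 2 / τ ^ 2 ∧
        b₀ = -(2 / τ ^ 2) * Real.exp (s₀ * τ))) ∧
    ((∀ k ≤ 2,
        iteratedDeriv k
          (fun s : ℂ => s ^ 2 + (a₁ : ℂ) * s + (a₀ : ℂ) +
            (b₀ : ℂ) * Complex.exp (-s * τ)) (s₀ : ℂ) = 0) →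
      iteratedDeriv 3
        (fun s : ℂ => s ^ 2 + (a₁ : ℂ) * s + (a₀ : ℂ) +
          (b₀ : ℂ) * Complex.exp (-s * τ)) (s₀ : ℂ) ≠ 0) := by
  have hτ0 : τ ≠ 0 := ne_of_gt hτ
  have e1 : iteratedDeriv 1 (midF τ a₀ a₁ b₀) = midG1 τ a₁ b₀ := by
    funext x; rw [iteratedDeriv_one]; exact (hd1 τ a₀ a₁ b₀ x).deriv
  have e2 : iteratedDeriv 2 (midF τ a₀ a₁ b₀) = midG2 τ b₀ := by
    funext x
    rw [show (2 : ℕ) = 1 + 1 from rfl, iteratedDeriv_succ, e1]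
    exact (hd2 τ a₁ b₀ x).deriv
  have e3 : iteratedDeriv 3 (midF τ a₀ a₁ b₀) = midG3 τ b₀ := by
    funext x
    rw [show (3 : ℕ) = 2 + 1 from rfl, iteratedDeriv_succ, e2]
    exact (hd3 τ b₀ x).deriv
  have hE : Complex.exp (-(s₀ : ℂ) * τ) = (Real.exp (-(s₀ * τ)) : ℂ) := by
    rw [Complex.ofReal_exp]; norm_num
  set E := Real.exp (-(s₀ * τ)) with hEdef
  have hEpos : 0 < E := Real.exp_pos _
  have hEE : E * Real.exp (s₀ * τ) = 1 := by
    rw [hEdef, ← Real.exp_add]; simp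
  have R0 : midF τ a₀ a₁ b₀ (s₀ : ℂ) = 0 ↔
      s₀ ^ 2 + a₁ * s₀ + a₀ + b₀ * E = 0 := by
    have : midF τ a₀ a₁ b₀ (s₀ : ℂ) =
        ((s₀ ^ 2 + a₁ * s₀ + a₀ + b₀ * E : ℝ) : ℂ) := by
      simp only [midF, hE]; push_cast; ring
    rw [this, Complex.ofReal_eq_zero]
  have R1 : midG1 τ a₁ b₀ (s₀ : ℂ) = 0 ↔
      2 * s₀ + a₁ + b₀ * (-τ) * E = 0 := by
    have : midG1 τ a₁ b₀ (s₀ : ℂ) = ((2 * s₀ + a₁ + b₀ * (-τ) * E : ℝ) : ℂ) := by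
      simp only [midG1, hE]; push_cast; ring
    rw [this, Complex.ofReal_eq_zero]
  have R2 : midG2 τ b₀ (s₀ : ℂ) = 0 ↔ 2 + b₀ * τ ^ 2 * E = 0 := by
    have : midG2 τ b₀ (s₀ : ℂ) = ((2 + b₀ * τ ^ 2 * E : ℝ) : ℂ) := by
      simp only [midG2, hE]; push_cast; ring
    rw [this, Complex.ofReal_eq_zero]
  have R3 : midG3 τ b₀ (s₀ : ℂ) = ((b₀ * τ ^ 2 * (-τ) * E : ℝ) : ℂ) := by
    simp only [midG3, hE]; push_cast; ring
  have key : (∀ k ≤ 2,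
      iteratedDeriv k (midF τ a₀ a₁ b₀) (s₀ : ℂ) = 0) ↔
      (s₀ ^ 2 + a₁ * s₀ + a₀ + b₀ * E = 0 ∧
        2 * s₀ + a₁ + b₀ * (-τ) * E = 0 ∧ 2 + b₀ * τ ^ 2 * E = 0) := by
    constructor
    · intro h
      refine ⟨R0.mp ?_, R1.mp ?_, R2.mp ?_⟩
      · simpa [iteratedDeriv_zero] using h 0 (by norm_num)
      · rw [← e1]; exact h 1 (by norm_num)
      · rw [← e2]; exact h 2 le_rfl
    · rintro ⟨h0, h1, h2⟩ k hk
      interval_cases k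
      · simpa [iteratedDeriv_zero] using R0.mpr h0
      · rw [e1]; exact R1.mpr h1
      · rw [e2]; exact R2.mpr h2
  have mainIff : (∀ k ≤ 2,
      iteratedDeriv k (midF τ a₀ a₁ b₀) (s₀ : ℂ) = 0) ↔
      (a₁ = -2 * s₀ - 2 / τ ∧ a₀ = s₀ ^ 2 + 2 * s₀ / τ + 2 / τ ^ 2 ∧
        b₀ = -(2 / τ ^ 2) * Real.exp (s₀ * τ)) := by
    rw [key]
    constructor
    · rintro ⟨h0, h1, h2⟩
      have hb : b₀ * E = -2 / τ ^ 2 := by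
        field_simp
        linarith
      have hbv : b₀ = -(2 / τ ^ 2) * Real.exp (s₀ * τ) := by
        calc b₀ = b₀ * (E * Real.exp (s₀ * τ)) := by rw [hEE]; ring
          _ = -(2 / τ ^ 2) * Real.exp (s₀ * τ) := by rw [← mul_assoc, hb]; ring
      have htau : b₀ * -τ * E = 2 / τ := by
        rw [show b₀ * -τ * E = -τ * (b₀ * E) from by ring, hb]
        field_simp
      have ha1 : a₁ = -2 * s₀ - 2 / τ := by linarith [h1, htau]
      refine ⟨ha1, ?_, hbv⟩
      have ha0 : a₀ = -s₀ ^ 2 - a₁ * s₀ - b₀ * E := by linarith [h0]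
      rw [ha0, ha1, hb]
      field_simp
      ring
    · rintro ⟨ha1, ha0, hb⟩
      have hbE : b₀ * E = -2 / τ ^ 2 := by
        rw [hb, show -(2 / τ ^ 2) * Real.exp (s₀ * τ) * E =
          -(2 / τ ^ 2) * (E * Real.exp (s₀ * τ)) from by ring, hEE]
        ring
      refine ⟨?_, ?_, ?_⟩
      · rw [ha0, ha1, hbE]
        field_simp
        ring
      · rw [ha1, show b₀ * -τ * E = -τ * (b₀ * E) from by ring, hbE]
        field_simp
        ring
      · rw [show b₀ * τ ^ 2 * E = τ ^ 2 * (b₀ * E) from by ring, hbE]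
        field_simp
        ring
  refine ⟨mainIff, ?_⟩
  intro h
  obtain ⟨-, -, h2⟩ := key.mp h
  show iteratedDeriv 3 (midF τ a₀ a₁ b₀) (s₀ : ℂ) ≠ 0
  rw [e3, R3, Ne, Complex.ofReal_eq_zero]
  have hbE : b₀ * E = -2 / τ ^ 2 := by
    field_simp
    linarith
  have hv : b₀ * τ ^ 2 * -τ * E = 2 * τ := by
    rw [show b₀ * τ ^ 2 * -τ * E = -τ * (τ ^ 2 * (b₀ * E)) from by ring, hbE]
    field_simp
  rw [hv]
  positivity
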